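/- Let a, b, δ, f, m, v be real numbers with b > 0, a + bδ > 0, f > 0, m ≥ 0, v > 0, and suppose 2·m·f + δ·f² ≥ 1/v and ((a + bδ)·f + b·m)² = b·(2a + δb)·(1/v). Then a·f = b·m and 2·m·f + δ·f² = 1/v. -/
import Mathlib


theorem stmt_1 (a b δ f m v : ℝ) (hb : 0 < b) (habδ : 0 < a + b*δ)
    (hf : 0 < f) (hm : 0 ≤ m) (hv : 0 < v)
    (h1 : 2*m*f + δ*f^2 ≥ 1/v)
    (h2 : ((a + b*δ)*f + b*m)^2 = b*(2*a + δ*b) * (1/v)) :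
    a*f = b*m ∧ 2*m*f + δ*f^2 = 1/v := by
  have hw : 0 < 1/v := by positivity
  have hpos : 0 < (a + b*δ)*f + b*m := by positivity
  have h3 : 0 < 2*a + δ*b := by nlinarith [mul_pos hpos hpos, mul_pos hb hw]
  have key : (a*f - b*m)^2 = b*(2*a + δ*b) * (1/v - (2*m*f + δ*f^2)) := by
    linear_combination h2
  have h4 : a*f - b*m = 0 := by nlinarith [mul_pos hb h3, sq_nonneg (a*f - b*m), mul_nonneg (mul_pos hb h3).le (sub_nonneg.mpr h1)]
  constructor
  · linarith
  · nlinarith [mul_pos hb h3, mul_nonneg (mul_pos hb h3).le (sub_nonneg.mpr h1)]
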